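/- arXiv:2105.08171 — 2 statements merged into one kernel-verified Lean document; each statement's English description precedes it below -/
import Mathlib

section
/- Substitution method lower bound for rank: Let T ∈ A ⊗ B ⊗ C be A-concise with dim A = m, and let k < m be a positive integer. Then R(T) ≥ min over k-dimensional subspaces A′ ⊆ A* of R(T restricted to A′ ⊗ B* ⊗ C*) plus (m − k), where T is viewed as a trilinear form A* ⊗ B* ⊗ C* → ℂ. -/
/-!
STATEMENT 5: Substitution method lower bound for rank: let `T ∈ A ⊗ B ⊗ C` be `A`-concise
with `dim A = m`, and let `k < m` be a positive integer.  Then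
`R(T) ≥ min_{A′ ∈ G(k, A*)} R(T|_{A′ ⊗ B* ⊗ C*}) + (m − k)`.
In coordinates, `A = ℂ^m`, `A*` is identified with `ℂ^m`, a `k`-dimensional subspace
`A′ ⊆ A*` is given by `k` linearly independent vectors `α_1, …, α_k`, and the restricted
tensor has entries `T′ l j k′ = ∑_i α_l i · T i j k′`.  `A`-conciseness means the `A`-slices
of `T` are linearly independent (the flattening `T_A : A* → B ⊗ C` is injective).
The statement `R(T) ≥ min …` is rendered as: there exists a `k`-dimensional subspace (a
minimizer) whose restricted tensor satisfies `R(T′) + (m − k) ≤ R(T)`.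
-/

noncomputable section

def tRank {a b c : ℕ} (T : Fin a → Fin b → Fin c → ℂ) : ℕ :=
  sInf {r | ∃ (u : Fin r → Fin a → ℂ) (v : Fin r → Fin b → ℂ) (w : Fin r → Fin c → ℂ),
    T = fun i j k => ∑ l, u l i * v l j * w l k}

lemma tset_nonempty {a b c : ℕ} (T : Fin a → Fin b → Fin c → ℂ) :
    Set.Nonempty {r | ∃ (u : Fin r → Fin a → ℂ) (v : Fin r → Fin b → ℂ) (w : Fin r → Fin c → ℂ),
      T = fun i j k => ∑ l, u l i * v l j * w l k} := by
  refine ⟨b * c, fun s i => T i (finProdFinEquiv.symm s).1 (finProdFinEquiv.symm s).2,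
    fun s j => if j = (finProdFinEquiv.symm s).1 then 1 else 0,
    fun s k => if k = (finProdFinEquiv.symm s).2 then 1 else 0, ?_⟩
  funext i j k
  rw [← Equiv.sum_comp finProdFinEquiv
    (fun s => T i (finProdFinEquiv.symm s).1 (finProdFinEquiv.symm s).2 *
      (if j = (finProdFinEquiv.symm s).1 then 1 else 0) *
      (if k = (finProdFinEquiv.symm s).2 then 1 else 0))]
  simp [Fintype.sum_prod_type, mul_ite, Finset.sum_ite_eq]

theorem substitution_method {m b c : ℕ} (k : ℕ) (hk : 0 < k) (hkm : k < m)
    (T : Fin m → Fin b → Fin c → ℂ)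
    (hconc : LinearIndependent ℂ (fun i : Fin m => fun j l => T i j l)) :
    ∃ α : Fin k → (Fin m → ℂ), LinearIndependent ℂ α ∧
      tRank (fun l j k' => ∑ i, α l i * T i j k') + (m - k) ≤ tRank T := by
  obtain ⟨u, v, w, hT⟩ := Nat.sInf_mem (tset_nonempty T)
  set r := tRank T with hr
  -- L : ℂ^m → ℂ^r, α ↦ (∑ i, u l i * α i)_l ; injective by conciseness
  set U : Matrix (Fin r) (Fin m) ℂ := Matrix.of (fun l i => u l i) with hU
  have hLinj : Function.Injective U.mulVecLin := by
    rw [← LinearMap.ker_eq_bot, LinearMap.ker_eq_bot']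
    intro α hα
    have h0 : ∀ l : Fin r, ∑ i, u l i * α i = 0 := by
      intro l
      have := congrFun hα l
      simpa [Matrix.mulVecLin, Matrix.mulVec, dotProduct, hU] using this
    have : ∑ i, α i • (fun j l => T i j l) = 0 := by
      funext j k'
      have : ∑ i, α i * T i j k' = 0 := by
        simp only [hT, Finset.mul_sum]
        rw [Finset.sum_comm]
        have key : ∀ l : Fin r, ∑ x, α x * (u l x * v l j * w l k')
            = (∑ x, u l x * α x) * (v l j * w l k') := by
          intro l
          rw [Finset.sum_mul]
          exact Finset.sum_congr rfl (fun x _ => by ring)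
        exact Finset.sum_eq_zero (fun l _ => (key l).trans (mul_eq_zero_of_left (h0 l) _))
      simpa [Finset.sum_apply] using this
    have := Fintype.linearIndependent_iff.mp hconc α (by simpa using this)
    funext i; exact this i
  have hmr : m ≤ r := by
    simpa using LinearMap.finrank_le_finrank_of_injective hLinj
  have hmk : m - k ≤ r := le_trans (Nat.sub_le m k) hmr
  -- P : ℂ^m → ℂ^(m-k), α ↦ (∑ i, u (castLE l') i * α i)
  set V : Matrix (Fin (m - k)) (Fin m) ℂ :=
    Matrix.of (fun l' i => u (Fin.castLE hmk l') i) with hV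
  set P := V.mulVecLin with hP
  have hker : k ≤ Module.finrank ℂ (LinearMap.ker P) := by
    have h1 := LinearMap.finrank_range_add_finrank_ker P
    have h2 : Module.finrank ℂ (LinearMap.range P) ≤ m - k :=
      (Submodule.finrank_le _).trans (by simp)
    have h3 : Module.finrank ℂ (Fin m → ℂ) = m := by simp
    omega
  let B := Module.finBasis ℂ (LinearMap.ker P)
  have hkB : k ≤ Module.finrank ℂ (LinearMap.ker P) := hker
  set α : Fin k → (Fin m → ℂ) := fun l => (B (Fin.castLE hkB l) : Fin m → ℂ) with hα
  have hLI : LinearIndependent ℂ α := by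
    have h1 : LinearIndependent ℂ (B ∘ Fin.castLE hkB) :=
      B.linearIndependent.comp _ (Fin.castLE_injective hkB)
    have h2 := h1.map' (LinearMap.ker P).subtype (Submodule.ker_subtype _)
    exact h2
  have hαker : ∀ (l : Fin k) (l' : Fin (m - k)),
      ∑ i, u (Fin.castLE hmk l') i * α l i = 0 := by
    intro l l'
    have hm : α l ∈ LinearMap.ker P := (B (Fin.castLE hkB l)).2
    have := congrFun (LinearMap.mem_ker.mp hm) l'
    simpa [hP, hV, Matrix.mulVecLin, Matrix.mulVec, dotProduct] using this
  refine ⟨α, hLI, ?_⟩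
  -- decomposition of the restricted tensor with r - (m - k) terms
  have he : (m - k) + (r - (m - k)) = r := by omega
  set g : Fin (r - (m - k)) → Fin r :=
    fun s => Fin.cast he (Fin.natAdd (m - k) s) with hg
  have hle : tRank (fun l j k' => ∑ i, α l i * T i j k') ≤ r - (m - k) := by
    apply Nat.sInf_le
    refine ⟨fun s l => ∑ i, α l i * u (g s) i, fun s => v (g s), fun s => w (g s), ?_⟩
    funext l j k'
    have expand : ∑ i, α l i * T i j k'
        = ∑ l' : Fin r, (∑ i, α l i * u l' i) * v l' j * w l' k' := by
      simp only [hT, Finset.mul_sum]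
      rw [Finset.sum_comm]
      refine Finset.sum_congr rfl (fun l' _ => ?_)
      rw [Finset.sum_mul, Finset.sum_mul]
      exact Finset.sum_congr rfl (fun x _ => by ring)
    rw [expand]
    rw [← Fintype.sum_equiv (finCongr he)
      (fun x => (∑ i, α l i * u (finCongr he x) i) * v (finCongr he x) j * w (finCongr he x) k')
      (fun l' => (∑ i, α l i * u l' i) * v l' j * w l' k') (fun x => rfl)]
    rw [Fin.sum_univ_add]
    have hz : ∀ l'' : Fin (m - k),
        (∑ i, α l i * u (finCongr he (Fin.castAdd _ l'')) i)
          * v (finCongr he (Fin.castAdd _ l'')) j * w (finCongr he (Fin.castAdd _ l'')) k' = 0 := by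
      intro l''
      have hcast : (finCongr he (Fin.castAdd (r - (m - k)) l'') : Fin r)
          = Fin.castLE hmk l'' := by
        apply Fin.ext; simp
      rw [hcast]
      have h0 : ∑ i, α l i * u (Fin.castLE hmk l'') i = 0 := by
        rw [← hαker l l'']
        exact Finset.sum_congr rfl (fun x _ => by ring)
      exact mul_eq_zero_of_left (mul_eq_zero_of_left h0 _) _
    rw [Finset.sum_congr rfl (fun l'' _ => hz l''), Finset.sum_const, smul_zero, zero_add]
    rfl
  omega
end
end

section
/- For a concise tensor T ∈ A ⊗ B ⊗ C with a border rank r decomposition, the degree-(1,1,0) component of the limiting apolar ideal satisfies: I_{110} := lim_{ε→0} (span of the points {a_i(ε) ⊗ b_i(ε)})^⊥ ⊆ A* ⊗ B* is contained in T(C*)^⊥ and has codimension at most r in A* ⊗ B*. -/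
/-!
STATEMENT 14: For a concise tensor `T ∈ A ⊗ B ⊗ C` with a border rank `r` decomposition
`T = lim_{ε→0} ∑_{i=1}^r a_i(ε) ⊗ b_i(ε) ⊗ c_i(ε)`, the degree-(1,1,0) component of the
limiting apolar ideal,
`I_{110} = lim_{ε→0} (span {a_i(ε) ⊗ b_i(ε)})^⊥ ⊆ A* ⊗ B*`,
is contained in `T(C*)^⊥` and has codimension at most `r` in `A* ⊗ B*`.

In coordinates (`A = ℂ^a`, etc., `A* ⊗ B*` identified with `a × b` arrays with the trace
pairing): given sequences `u, v, w` whose rank-`r` sums converge to `T`, there is a subspace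
`I` of `A* ⊗ B*` of dimension at least `a·b − r` (codimension at most `r`), each of whose
elements is a limit point (in the Grassmannian-limit sense) of elements of the perps
`W_n = {α | ⟨α, u_n(i) ⊗ v_n(i)⟩ = 0 ∀ i}`, and `I ⊆ T(C*)^⊥`.  Conciseness of `T` is the
linear independence of its slices in each of the three directions.
-/

noncomputable section
open Module Filter Topology

private lemma alg_aux {a b c r : ℕ} (s : Fin a → Fin b → ℂ) (U : Fin r → Fin a → ℂ)
    (V : Fin r → Fin b → ℂ) (W : Fin r → Fin c → ℂ) (γ : Fin c → ℂ)
    (h : ∀ l, ∑ i, ∑ j, s i j * (U l i * V l j) = 0) :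
    ∑ i, ∑ j, s i j * (∑ k, (∑ l, U l i * V l j * W l k) * γ k) = 0 := by
  have key : ∑ i, ∑ j, s i j * (∑ k, (∑ l, U l i * V l j * W l k) * γ k)
      = ∑ l, (∑ i, ∑ j, s i j * (U l i * V l j)) * (∑ k, W l k * γ k) := by
    simp only [Finset.sum_mul, Finset.mul_sum]
    conv_lhs => enter [2, i, 2, j]; rw [Finset.sum_comm]
    conv_lhs => enter [2, i]; rw [Finset.sum_comm]
    rw [Finset.sum_comm]
    conv_rhs => enter [2, l]; rw [Finset.sum_comm]
    conv_rhs => enter [2, l, 2, i]; rw [Finset.sum_comm]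
    refine Finset.sum_congr rfl fun l _ => Finset.sum_congr rfl fun i _ =>
      Finset.sum_congr rfl fun j _ => Finset.sum_congr rfl fun k _ => by ring
  rw [key]
  simp [h]

theorem border_apolarity_I110 {a b c : ℕ} (r : ℕ)
    (T : Fin a → Fin b → Fin c → ℂ)
    (hA : LinearIndependent ℂ (fun i : Fin a => fun j k => T i j k))
    (hB : LinearIndependent ℂ (fun j : Fin b => fun i k => T i j k))
    (hC : LinearIndependent ℂ (fun k : Fin c => fun i j => T i j k))
    (u : ℕ → Fin r → Fin a → ℂ) (v : ℕ → Fin r → Fin b → ℂ) (w : ℕ → Fin r → Fin c → ℂ)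
    (hlim : Tendsto (fun n => (fun i j k => ∑ l, u n l i * v n l j * w n l k :
        Fin a → Fin b → Fin c → ℂ)) atTop (nhds T)) :
    ∃ I : Submodule ℂ (Fin a → Fin b → ℂ),
      (∀ α ∈ I, ∃ s : ℕ → (Fin a → Fin b → ℂ),
        (∀ n, ∀ l : Fin r, ∑ i, ∑ j, s n i j * (u n l i * v n l j) = 0) ∧
        MapClusterPt α atTop s) ∧
      (∀ α ∈ I, ∀ γ : Fin c → ℂ, ∑ i, ∑ j, α i j * (∑ k, T i j k * γ k) = 0) ∧
      a * b - r ≤ finrank ℂ I := by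
  classical
  set E := EuclideanSpace ℂ (Fin a × Fin b) with hE
  let L : E ≃ₗ[ℂ] (Fin a → Fin b → ℂ) :=
    { toFun := fun x i j => x (i, j)
      invFun := fun y => WithLp.toLp 2 (fun p => y p.1 p.2)
      map_add' := fun x y => rfl
      map_smul' := fun cc x => rfl
      left_inv := fun x => rfl
      right_inv := fun y => rfl }
  let φ : ℕ → (E →ₗ[ℂ] (Fin r → ℂ)) := fun n =>
    { toFun := fun x l => ∑ p : Fin a × Fin b, x p * (u n l p.1 * v n l p.2)
      map_add' := by
        intro x y; funext l
        have hp : ∀ p : Fin a × Fin b, (x + y) p = x p + y p := fun p => rfl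
        simp [hp, add_mul, Finset.sum_add_distrib]
      map_smul' := by
        intro cc x; funext l
        have hp : ∀ p : Fin a × Fin b, (cc • x) p = cc * x p := fun p => rfl
        simp [hp, Finset.mul_sum, mul_assoc] }
  let Wn : ℕ → Submodule ℂ E := fun n => LinearMap.ker (φ n)
  set d := a * b - r with hd
  have hdim : ∀ n, d ≤ finrank ℂ (Wn n) := by
    intro n
    have h1 := LinearMap.finrank_range_add_finrank_ker (φ n)
    have h2 : finrank ℂ (LinearMap.range (φ n)) ≤ r := by
      simpa using Submodule.finrank_le (LinearMap.range (φ n))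
    have h3 : finrank ℂ E = a * b := by
      show finrank ℂ (EuclideanSpace ℂ (Fin a × Fin b)) = a * b
      simp [finrank_euclideanSpace]
    have h4 : finrank ℂ (Wn n) = finrank ℂ (LinearMap.ker (φ n)) := rfl
    omega
  let e : ℕ → Fin d → E := fun n i =>
    ((stdOrthonormalBasis ℂ (Wn n)) (Fin.castLE (hdim n) i) : E)
  have he_mem : ∀ n i, e n i ∈ Wn n := fun n i =>
    ((stdOrthonormalBasis ℂ (Wn n)) (Fin.castLE (hdim n) i)).2
  have he_on : ∀ n, Orthonormal ℂ (e n) := fun n =>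
    ((stdOrthonormalBasis ℂ (Wn n)).orthonormal.comp_linearIsometry
      (Wn n).subtypeₗᵢ).comp (Fin.castLE (hdim n)) (Fin.castLE_injective _)
  -- Bolzano–Weierstrass
  have hmem : ∀ n, e n ∈ Metric.closedBall (0 : Fin d → E) 1 := by
    intro n
    rw [mem_closedBall_zero_iff]
    rw [pi_norm_le_iff_of_nonneg (by norm_num)]
    intro i
    rw [(he_on n).1 i]
  obtain ⟨einf, -, ψ, hψ, hconv⟩ :=
    (isCompact_closedBall (0 : Fin d → E) 1).tendsto_subseq hmem
  have hcomp : ∀ i, Tendsto (fun m => e (ψ m) i) atTop (𝓝 (einf i)) := by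
    intro i
    exact tendsto_pi_nhds.mp hconv i
  have hon : Orthonormal ℂ einf := by
    rw [orthonormal_iff_ite]
    intro i j
    have h1 : Tendsto (fun m => (inner ℂ (e (ψ m) i) (e (ψ m) j) : ℂ)) atTop
        (𝓝 (inner ℂ (einf i) (einf j))) := (hcomp i).inner (hcomp j)
    have h2 : (fun m => (inner ℂ (e (ψ m) i) (e (ψ m) j) : ℂ))
        = fun _ => if i = j then (1 : ℂ) else 0 := by
      funext m
      exact orthonormal_iff_ite.mp (he_on (ψ m)) i j
    rw [h2] at h1
    exact tendsto_nhds_unique h1 tendsto_const_nhds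
  let IE : Submodule ℂ E := Submodule.span ℂ (Set.range einf)
  -- membership facts for Wn elements
  have hWperp : ∀ n, ∀ x ∈ Wn n, ∀ l : Fin r,
      ∑ i, ∑ j, x (i, j) * (u n l i * v n l j) = 0 := by
    intro n x hx l
    have h0 : φ n x = 0 := hx
    have h1 := congrFun h0 l
    simpa [φ, Fintype.sum_prod_type] using h1
  -- the decomposition of elements of IE
  have hdec : ∀ x ∈ IE, ∃ cf : Fin d → ℂ, ∑ i, cf i • einf i = x := by
    intro x hx
    exact (Finsupp.mem_span_range_iff_exists_finsupp.mp hx).elim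
      (fun cf hcf => ⟨cf, by rwa [Finsupp.sum_fintype] at hcf; intro i; simp⟩)
  refine ⟨IE.map L.toLinearMap, ?_, ?_, ?_⟩
  · -- condition 1
    intro α hα
    obtain ⟨x, hx, rfl⟩ := Submodule.mem_map.mp hα
    obtain ⟨cf, hcf⟩ := hdec x hx
    set sE : ℕ → E := fun n => ∑ i, cf i • e n i with hsE
    have hsEW : ∀ n, sE n ∈ Wn n := fun n =>
      Submodule.sum_mem _ fun i _ => Submodule.smul_mem _ _ (he_mem n i)
    refine ⟨fun n i j => sE n (i, j), fun n l => hWperp n (sE n) (hsEW n) l, ?_⟩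
    have hconv2 : Tendsto (fun m => sE (ψ m)) atTop (𝓝 x) := by
      rw [← hcf]
      exact tendsto_finset_sum _ fun i _ => (hcomp i).const_smul (cf i)
    have hLcont : Continuous (L : E → (Fin a → Fin b → ℂ)) :=
      L.toLinearMap.continuous_of_finiteDimensional
    have h3 : Tendsto (fun m => (fun i j => sE (ψ m) (i, j) : Fin a → Fin b → ℂ)) atTop
        (𝓝 (L.toLinearMap x)) := (hLcont.tendsto x).comp hconv2
    exact MapClusterPt.of_comp hψ.tendsto_atTop h3.mapClusterPt
  · -- condition 2
    intro α hα γ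
    obtain ⟨x, hx, rfl⟩ := Submodule.mem_map.mp hα
    obtain ⟨cf, hcf⟩ := hdec x hx
    set sE : ℕ → E := fun n => ∑ i, cf i • e n i with hsE
    have hsEW : ∀ n, sE n ∈ Wn n := fun n =>
      Submodule.sum_mem _ fun i _ => Submodule.smul_mem _ _ (he_mem n i)
    have hconv2 : Tendsto (fun m => sE (ψ m)) atTop (𝓝 x) := by
      rw [← hcf]
      exact tendsto_finset_sum _ fun i _ => (hcomp i).const_smul (cf i)
    have hsij : ∀ i j, Tendsto (fun m => sE (ψ m) (i, j)) atTop (𝓝 (x (i, j))) := by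
      intro i j
      exact (tendsto_pi_nhds.mp (((PiLp.continuous_ofLp 2 _).tendsto x).comp hconv2) (i, j))
    have hTn : Tendsto (fun m => (fun i j k => ∑ l, u (ψ m) l i * v (ψ m) l j * w (ψ m) l k :
        Fin a → Fin b → Fin c → ℂ)) atTop (𝓝 T) := hlim.comp hψ.tendsto_atTop
    have hTk : ∀ i j k, Tendsto (fun m => ∑ l, u (ψ m) l i * v (ψ m) l j * w (ψ m) l k)
        atTop (𝓝 (T i j k)) := by
      intro i j k
      exact tendsto_pi_nhds.mp (tendsto_pi_nhds.mp (tendsto_pi_nhds.mp hTn i) j) k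
    have hfin : Tendsto (fun m => ∑ i, ∑ j, sE (ψ m) (i, j) *
        (∑ k, (∑ l, u (ψ m) l i * v (ψ m) l j * w (ψ m) l k) * γ k)) atTop
        (𝓝 (∑ i, ∑ j, x (i, j) * (∑ k, T i j k * γ k))) := by
      refine tendsto_finset_sum _ fun i _ => tendsto_finset_sum _ fun j _ => ?_
      exact (hsij i j).mul (tendsto_finset_sum _ fun k _ => (hTk i j k).mul_const (γ k))
    have hzero : (fun m => ∑ i, ∑ j, sE (ψ m) (i, j) *
        (∑ k, (∑ l, u (ψ m) l i * v (ψ m) l j * w (ψ m) l k) * γ k)) = fun _ => (0 : ℂ) := by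
      funext m
      exact alg_aux _ (u (ψ m)) (v (ψ m)) (w (ψ m)) γ
        (fun l => hWperp (ψ m) (sE (ψ m)) (hsEW (ψ m)) l)
    rw [hzero] at hfin
    show ∑ i, ∑ j, x (i, j) * (∑ k, T i j k * γ k) = 0
    exact tendsto_nhds_unique hfin tendsto_const_nhds
  · -- finrank bound
    rw [LinearEquiv.finrank_map_eq]
    rw [finrank_span_eq_card hon.linearIndependent]
    simp [hd]
end
end
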